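/- For n variables x_1, ..., x_n, the symmetrized expression ∑_{w ∈ S_n} w · ( x_1^{n-1} x_2^{n-2} ⋯ x_{n-1} / ∏_{1 ≤ i < j ≤ n} (x_i - x_j) ) equals 1, i.e., the classical Schur polynomial corresponding to the empty partition is 1. -/

import Mathlib

open Finset Matrix in
private lemma pairs_prod_eq {K : Type*} [CommRing K] {n : ℕ} (f : Fin n → Fin n → K) :
    ∏ p ∈ Finset.univ.filter (fun p : Fin n × Fin n => p.1 < p.2), f p.1 p.2
      = ∏ i : Fin n, ∏ j ∈ Finset.Ioi i, f i j := by
  rw [← Finset.univ_product_univ, Finset.prod_filter, Finset.prod_product]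
  refine Finset.prod_congr rfl fun i _ => ?_
  rw [← Finset.prod_filter]
  refine Finset.prod_congr ?_ fun _ _ => rfl
  ext j; simp

open Finset Matrix in
private lemma schur_empty {K : Type*} [Field K] {n : ℕ} (x : Fin n → K)
    (hx : Function.Injective x) :
    ∑ w : Equiv.Perm (Fin n),
        (∏ i : Fin n, x (w i) ^ (n - 1 - (i : ℕ))) /
          ∏ p ∈ Finset.univ.filter (fun p : Fin n × Fin n => p.1 < p.2),
            (x (w p.1) - x (w p.2))
      = 1 := by
  set S := Finset.univ.filter (fun p : Fin n × Fin n => p.1 < p.2) with hS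
  set Δ : K := ∏ p ∈ S, (x p.1 - x p.2) with hΔdef
  have hΔ : Δ ≠ 0 := by
    rw [hΔdef]
    refine Finset.prod_ne_zero_iff.2 fun p hp => sub_ne_zero.2 fun h => ?_
    have : p.1 < p.2 := (Finset.mem_filter.1 hp).2
    exact absurd (hx h) this.ne
  set V : K := det (vandermonde x) with hV
  -- generic rewriting of the pair product
  have key : ∀ y : Fin n → K,
      ∏ p ∈ S, (y p.1 - y p.2) = (-1 : K) ^ S.card * det (vandermonde y) := by
    intro y
    rw [det_vandermonde]
    calc ∏ p ∈ S, (y p.1 - y p.2) = ∏ p ∈ S, (-1) * (y p.2 - y p.1) := by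
          refine Finset.prod_congr rfl fun p _ => by ring
      _ = (-1 : K) ^ S.card * ∏ p ∈ S, (y p.2 - y p.1) := by
          rw [Finset.prod_mul_distrib, Finset.prod_const]
      _ = (-1 : K) ^ S.card * ∏ i : Fin n, ∏ j ∈ Finset.Ioi i, (y j - y i) := by
          rw [hS, pairs_prod_eq (fun i j => y j - y i)]
  have hsub : ∀ w : Equiv.Perm (Fin n),
      vandermonde (x ∘ w) = (vandermonde x).submatrix w id := by
    intro w; ext i j; simp [vandermonde_apply]
  have hD : ∀ w : Equiv.Perm (Fin n),
      ∏ p ∈ S, (x (w p.1) - x (w p.2)) = ((Equiv.Perm.sign w : ℤ) : K) * Δ := by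
    intro w
    have h1 := key (x ∘ w)
    have h2 := key x
    rw [hsub w, det_permute] at h1
    simp only [Function.comp_apply] at h1
    rw [hΔdef, h2, h1]
    ring
  -- numerator as determinant
  set M : Matrix (Fin n) (Fin n) K := Matrix.of fun a i => x a ^ (n - 1 - (i : ℕ)) with hM
  have hMdet : det M = Δ := by
    have hMsub : M = (vandermonde (x ∘ Fin.rev)).submatrix Fin.revPerm Fin.revPerm := by
      ext a i
      simp only [hM, Matrix.of_apply, submatrix_apply, vandermonde_apply, Function.comp,
        Fin.revPerm_apply, Fin.rev_rev, Fin.val_rev]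
      congr 1
      omega
    rw [hMsub, det_submatrix_equiv_self, det_vandermonde, hΔdef, hS,
      ← pairs_prod_eq (fun i j => (x ∘ Fin.rev) j - (x ∘ Fin.rev) i)]
    refine Finset.prod_nbij' (fun p : Fin n × Fin n => (p.2.rev, p.1.rev))
      (fun p : Fin n × Fin n => (p.2.rev, p.1.rev)) ?_ ?_ ?_ ?_ ?_
    · intro p hp
      simp only [Finset.mem_filter, Finset.mem_univ, true_and] at hp ⊢
      exact Fin.rev_lt_rev.2 hp
    · intro p hp
      simp only [Finset.mem_filter, Finset.mem_univ, true_and] at hp ⊢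
      exact Fin.rev_lt_rev.2 hp
    · intro p _; simp [Fin.rev_rev]
    · intro p _; simp [Fin.rev_rev]
    · intro p _; simp [Fin.rev_rev]
  have hnum : ∑ w : Equiv.Perm (Fin n),
      ((Equiv.Perm.sign w : ℤ) : K) * ∏ i : Fin n, x (w i) ^ (n - 1 - (i : ℕ)) = Δ := by
    rw [← hMdet, det_apply]
    refine Finset.sum_congr rfl fun w _ => ?_
    rw [Units.smul_def, zsmul_eq_mul]
    rfl
  calc ∑ w : Equiv.Perm (Fin n),
        (∏ i : Fin n, x (w i) ^ (n - 1 - (i : ℕ))) /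
          ∏ p ∈ S, (x (w p.1) - x (w p.2))
      = ∑ w : Equiv.Perm (Fin n),
        ((Equiv.Perm.sign w : ℤ) : K) * (∏ i : Fin n, x (w i) ^ (n - 1 - (i : ℕ))) / Δ := by
        refine Finset.sum_congr rfl fun w _ => ?_
        rw [hD w]
        rcases Int.units_eq_one_or (Equiv.Perm.sign w) with h | h <;> rw [h]
        · push_cast; rw [one_mul, one_mul]
        · push_cast
          rw [neg_one_mul, neg_one_mul, div_neg, neg_div]
    _ = (∑ w : Equiv.Perm (Fin n),
        ((Equiv.Perm.sign w : ℤ) : K) * ∏ i : Fin n, x (w i) ^ (n - 1 - (i : ℕ))) / Δ := by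
        rw [Finset.sum_div]
    _ = 1 := by rw [hnum, div_self hΔ]

open MvPolynomial

set_option maxHeartbeats 1000000 in
/-- In the rational function field `ℚ(x₁,…,xₙ)`, the symmetrization
`∑_{w ∈ Sₙ} w · ( x^{ρ_{n-1}} / ∏_{i<j} (xᵢ - xⱼ) ) = 1`,
i.e. the Schur polynomial of the empty partition is `1`. -/
theorem stmt4 (n : ℕ) :
    letI K := FractionRing (MvPolynomial (Fin n) ℚ)
    letI x : Fin n → K := fun i => algebraMap (MvPolynomial (Fin n) ℚ) K (X i)
    ∑ w : Equiv.Perm (Fin n),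
        (∏ i : Fin n, x (w i) ^ (n - 1 - (i : ℕ))) /
          ∏ p ∈ Finset.univ.filter (fun p : Fin n × Fin n => p.1 < p.2),
            (x (w p.1) - x (w p.2))
      = 1 := by
  beta_reduce
  exact schur_empty (K := FractionRing (MvPolynomial (Fin n) ℚ))
    (fun i => algebraMap (MvPolynomial (Fin n) ℚ) (FractionRing (MvPolynomial (Fin n) ℚ)) (X i))
    fun i j h =>
    MvPolynomial.X_injective (IsFractionRing.injective (MvPolynomial (Fin n) ℚ) _ h)
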